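/- arXiv:2504.16477 — 2 statements merged into one kernel-verified Lean document; each statement's English description precedes it below -/
import Mathlib

section
/- Let E be a real inner product space, and let f : E → ℝ be a differentiable function that is μ-strongly convex and L-smooth with 0 < μ ≤ L. Then for every β ≥ 0 and all x₁, x₂ ∈ E: ‖x₁ − x₂ − β(∇f(x₁) − ∇f(x₂))‖² ≤ (1 − β·(2μL/(μ + L)))·‖x₁ − x₂‖² − β·(2/(μ + L) − β)·‖∇f(x₁) − ∇f(x₂)‖². -/
open RealInnerProductSpace intervalIntegral

theorem descent_lemma
    {E : Type*} [NormedAddCommGroup E] [InnerProductSpace ℝ E] [CompleteSpace E]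
    (f : E → ℝ) (L : ℝ) (hdiff : Differentiable ℝ f) (hL : 0 ≤ L)
    (hsmooth : ∀ x y : E, ‖gradient f x - gradient f y‖ ≤ L * ‖x - y‖) :
    ∀ x y : E, f y ≤ f x + ⟪gradient f x, y - x⟫ + (L / 2) * ‖y - x‖ ^ 2 := by
  intro x y
  set v := y - x with hv
  have hgradcont : Continuous (gradient f) := by
    apply LipschitzWith.continuous (K := L.toNNReal)
    apply LipschitzWith.of_dist_le_mul
    intro a b
    simpa [dist_eq_norm, Real.coe_toNNReal _ hL] using hsmooth a b
  have key : ∀ t : ℝ, HasDerivAt (fun t : ℝ => f (x + t • v))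
      ⟪gradient f (x + t • v), v⟫ t := by
    intro t
    have hc : HasDerivAt (fun t : ℝ => x + t • v) v t := by
      simpa using ((hasDerivAt_id t).smul_const v).const_add x
    have hf : HasFDerivAt f (InnerProductSpace.toDual ℝ E (gradient f (x + t • v)))
        (x + t • v) := (hdiff (x + t • v)).hasGradientAt.hasFDerivAt
    simpa [Function.comp_def] using hf.comp_hasDerivAt t hc
  have contint : Continuous fun t : ℝ => ⟪gradient f (x + t • v), v⟫ := by
    exact (hgradcont.comp (by continuity)).inner continuous_const
  have ftc : ∫ t in (0:ℝ)..1, ⟪gradient f (x + t • v), v⟫ = f (x + (1:ℝ) • v) - f (x + (0:ℝ) • v) := by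
    exact intervalIntegral.integral_eq_sub_of_hasDerivAt (fun t _ => key t)
      (contint.intervalIntegrable 0 1)
  have hxy : x + (1:ℝ) • v = y := by simp [hv]
  have hx0 : x + (0:ℝ) • v = x := by simp
  rw [hxy, hx0] at ftc
  have hmono : ∫ t in (0:ℝ)..1, ⟪gradient f (x + t • v), v⟫ ≤
      ∫ t in (0:ℝ)..1, (⟪gradient f x, v⟫ + L * t * ‖v‖ ^ 2) := by
    apply intervalIntegral.integral_mono_on (by norm_num)
      (contint.intervalIntegrable 0 1)
      (by apply Continuous.intervalIntegrable; continuity)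
    intro t ht
    have h1 : ⟪gradient f (x + t • v) - gradient f x, v⟫ ≤ L * t * ‖v‖ ^ 2 := by
      calc ⟪gradient f (x + t • v) - gradient f x, v⟫
          ≤ ‖gradient f (x + t • v) - gradient f x‖ * ‖v‖ := real_inner_le_norm _ _
        _ ≤ (L * ‖(x + t • v) - x‖) * ‖v‖ := by
            gcongr; exact hsmooth _ _
        _ = L * t * ‖v‖ ^ 2 := by
            rw [add_sub_cancel_left, norm_smul, Real.norm_eq_abs, abs_of_nonneg ht.1]
            ring
    have := inner_sub_left (𝕜 := ℝ) (gradient f (x + t • v)) (gradient f x) v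
    linarith [h1, this.symm.le, this.le]
  have hint : ∫ t in (0:ℝ)..1, (⟪gradient f x, v⟫ + L * t * ‖v‖ ^ 2)
      = ⟪gradient f x, v⟫ + (L / 2) * ‖v‖ ^ 2 := by
    rw [intervalIntegral.integral_add (by apply Continuous.intervalIntegrable; continuity)
      (by apply Continuous.intervalIntegrable; continuity)]
    simp only [intervalIntegral.integral_const, smul_eq_mul]
    have : ∫ t in (0:ℝ)..1, L * t * ‖v‖ ^ 2 = (L / 2) * ‖v‖ ^ 2 := by
      have : (fun t : ℝ => L * t * ‖v‖ ^ 2) = fun t : ℝ => (L * ‖v‖ ^ 2) * t := by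
        funext t; ring
      rw [this, intervalIntegral.integral_const_mul, integral_id]
      ring
    rw [this]; ring
  rw [ftc] at hmono
  rw [hint] at hmono
  linarith


/-- Lower quadratic bound from convexity plus a quadratic upper bound (co-coercivity step). -/
theorem cocoercive_aux
    {E : Type*} [NormedAddCommGroup E] [InnerProductSpace ℝ E]
    (φ : E → ℝ) (G : E → E) (C : ℝ) (hC : 0 < C)
    (hconv : ∀ x y : E, φ x + ⟪G x, y - x⟫ ≤ φ y)
    (hdesc : ∀ x y : E, φ y ≤ φ x + ⟪G x, y - x⟫ + (C / 2) * ‖y - x‖ ^ 2) :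
    ∀ x y : E, φ x + ⟪G x, y - x⟫ + (1 / (2 * C)) * ‖G y - G x‖ ^ 2 ≤ φ y := by
  intro x y
  set d := G y - G x with hd
  set z := y - (1 / C) • d with hz
  have h1 := hconv x z
  have h2 := hdesc y z
  have hzy : z - y = -((1 / C) • d) := by rw [hz]; abel
  have hnorm : ‖z - y‖ ^ 2 = (1 / C) ^ 2 * ‖d‖ ^ 2 := by
    rw [hzy, norm_neg, norm_smul, mul_pow, Real.norm_eq_abs, sq_abs]
  have hinner2 : ⟪G y, z - y⟫ = -((1 / C) * ⟪G y, d⟫) := by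
    rw [hzy, inner_neg_right, real_inner_smul_right]
  have hinner1 : ⟪G x, z - x⟫ = ⟪G x, y - x⟫ - (1 / C) * ⟪G x, d⟫ := by
    have : z - x = (y - x) - (1 / C) • d := by rw [hz]; abel
    rw [this, inner_sub_right, real_inner_smul_right]
  rw [hinner1] at h1
  rw [hinner2, hnorm] at h2
  have hdd : ⟪G y, d⟫ - ⟪G x, d⟫ = ‖d‖ ^ 2 := by
    rw [← inner_sub_left, ← hd, real_inner_self_eq_norm_sq]
  have hC' : C ≠ 0 := ne_of_gt hC
  have key : (1 / C) * ⟪G y, d⟫ - (1 / C) * ⟪G x, d⟫ = (1 / C) * ‖d‖ ^ 2 := by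
    rw [← mul_sub, hdd]
  have hc2 : C / 2 * (1 / C) ^ 2 = 1 / (2 * C) := by field_simp
  have hc3 : (1 / C) - 1 / (2 * C) = 1 / (2 * C) := by field_simp; ring
  nlinarith [h1, h2, key, hc2, hc3]

/-- Coercivity inequality for strongly convex smooth functions. -/
theorem coercivity
    {E : Type*} [NormedAddCommGroup E] [InnerProductSpace ℝ E] [CompleteSpace E]
    (f : E → ℝ) (μ L : ℝ)
    (hdiff : Differentiable ℝ f)
    (hμ : 0 < μ) (hμL : μ ≤ L)
    (hstrong : ∀ x y : E,
      f y ≥ f x + ⟪gradient f x, y - x⟫ + (μ / 2) * ‖y - x‖ ^ 2)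
    (hsmooth : ∀ x y : E, ‖gradient f x - gradient f y‖ ≤ L * ‖x - y‖) :
    ∀ x y : E, μ * L / (μ + L) * ‖x - y‖ ^ 2 + 1 / (μ + L) * ‖gradient f x - gradient f y‖ ^ 2
      ≤ ⟪x - y, gradient f x - gradient f y⟫ := by
  intro x y
  have hL : 0 < L := lt_of_lt_of_le hμ hμL
  have hμL0 : 0 < μ + L := by linarith
  set g := gradient f x - gradient f y with hg
  set w := x - y with hw
  -- strong monotonicity
  have hmono : μ * ‖w‖ ^ 2 ≤ ⟪w, g⟫ := by
    have h1 := hstrong x y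
    have h2 := hstrong y x
    have e1 : ⟪gradient f y, x - y⟫ = -⟪gradient f y, y - x⟫ := by
      rw [← inner_neg_right]; congr 1; abel
    have e2 : ⟪w, g⟫ = ⟪gradient f x, x - y⟫ - ⟪gradient f y, x - y⟫ := by
      rw [hw, hg, real_inner_comm, inner_sub_left]
    have e3 : ⟪gradient f x, x - y⟫ = -⟪gradient f x, y - x⟫ := by
      rw [← inner_neg_right]; congr 1; abel
    have e4 : ‖y - x‖ = ‖w‖ := by rw [hw, ← norm_neg]; congr 1; abel
    have e5 : ‖x - y‖ = ‖w‖ := by rw [hw]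
    rw [e4] at h1
    rw [e5] at h2
    linarith [h1, h2, e1.le, e1.ge, e2.le, e2.ge, e3.le, e3.ge]
  have hkey : μ * L * ‖w‖ ^ 2 + ‖g‖ ^ 2 ≤ (μ + L) * ⟪w, g⟫ := by
    rcases eq_or_lt_of_le hμL with heq | hlt
    · -- μ = L
      subst heq
      have hgb : ‖g‖ ≤ μ * ‖w‖ := hsmooth x y
      have h1 : ‖g‖ ^ 2 ≤ μ ^ 2 * ‖w‖ ^ 2 := by nlinarith [norm_nonneg g, norm_nonneg w]
      nlinarith [mul_le_mul_of_nonneg_left hmono hμ.le, h1]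
    · -- μ < L
      have hC : 0 < L - μ := by linarith
      set φ : E → ℝ := fun z => f z - μ / 2 * ‖z‖ ^ 2 with hφ
      set G : E → E := fun z => gradient f z - μ • z with hG
      have hid : ∀ a b : E, ‖b‖ ^ 2 = ‖a‖ ^ 2 + 2 * ⟪a, b - a⟫ + ‖b - a‖ ^ 2 := by
        intro a b
        have := norm_add_sq_real a (b - a)
        simpa using this
      have hGdiff : ∀ a b : E, ⟪G a, b - a⟫ = ⟪gradient f a, b - a⟫ - μ * ⟪a, b - a⟫ := by
        intro a b
        rw [hG]; simp only [inner_sub_left, real_inner_smul_left]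
      have hconv : ∀ a b : E, φ a + ⟪G a, b - a⟫ ≤ φ b := by
        intro a b
        have h := hstrong a b
        have hi := hid a b
        rw [hφ]; simp only
        rw [hGdiff]
        nlinarith [h, hi]
      have hdesc : ∀ a b : E, φ b ≤ φ a + ⟪G a, b - a⟫ + ((L - μ) / 2) * ‖b - a‖ ^ 2 := by
        intro a b
        have h := descent_lemma f L hdiff hL.le hsmooth a b
        have hi := hid a b
        rw [hφ]; simp only
        rw [hGdiff]
        nlinarith [h, hi]
      have key1 := cocoercive_aux φ G (L - μ) hC hconv hdesc x y
      have key2 := cocoercive_aux φ G (L - μ) hC hconv hdesc y x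
      have hGyx : G y - G x = -(g - μ • w) := by
        rw [hG, hg, hw]; simp only; rw [smul_sub]; abel
      have hGxy : G x - G y = g - μ • w := by
        rw [hG, hg, hw]; simp only; rw [smul_sub]; abel
      have hnormG : ‖G y - G x‖ = ‖g - μ • w‖ := by rw [hGyx, norm_neg]
      have hnormG2 : ‖G x - G y‖ = ‖g - μ • w‖ := by rw [hGxy]
      have hGw : ⟪G x - G y, w⟫ = ⟪w, g⟫ - μ * ‖w‖ ^ 2 := by
        rw [hGxy, inner_sub_left, real_inner_smul_left, real_inner_comm,
          real_inner_self_eq_norm_sq]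
      -- adding the two co-coercivity bounds
      have hsumdiv : (1 / (L - μ)) * ‖g - μ • w‖ ^ 2 ≤ ⟪w, g⟫ - μ * ‖w‖ ^ 2 := by
        have e1 : ⟪G x, y - x⟫ = -⟪G x, w⟫ := by
          rw [← inner_neg_right]; congr 1; rw [hw]; abel
        have e2 : ⟪G y, x - y⟫ = ⟪G y, w⟫ := by rw [hw]
        rw [e1, hnormG] at key1
        rw [e2, hnormG2] at key2
        have hGsub : ⟪G x - G y, w⟫ = ⟪G x, w⟫ - ⟪G y, w⟫ := inner_sub_left _ _ _
        have hcc : 1 / (2 * (L - μ)) + 1 / (2 * (L - μ)) = 1 / (L - μ) := by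
          rw [← add_div, div_eq_div_iff (by positivity) hC.ne']; ring
        rw [hGw] at hGsub
        nlinarith [key1, key2, hcc, hGsub]
      have hmul := mul_le_mul_of_nonneg_left hsumdiv hC.le
      have hcancel : (L - μ) * ((1 / (L - μ)) * ‖g - μ • w‖ ^ 2) = ‖g - μ • w‖ ^ 2 := by
        field_simp
      have hsum : ‖g - μ • w‖ ^ 2 ≤ (L - μ) * (⟪w, g⟫ - μ * ‖w‖ ^ 2) := by
        linarith [hmul, hcancel.le, hcancel.ge]
      have hexp : ‖g - μ • w‖ ^ 2 = ‖g‖ ^ 2 - 2 * μ * ⟪w, g⟫ + μ ^ 2 * ‖w‖ ^ 2 := by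
        rw [norm_sub_sq_real, norm_smul, real_inner_smul_right, Real.norm_eq_abs,
          abs_of_nonneg hμ.le, mul_pow, real_inner_comm]
        ring
      rw [hexp] at hsum
      ring_nf at hsum ⊢
      linarith [hsum]
  have hform : μ * L / (μ + L) * ‖w‖ ^ 2 + 1 / (μ + L) * ‖g‖ ^ 2
      = (μ * L * ‖w‖ ^ 2 + ‖g‖ ^ 2) / (μ + L) := by ring
  rw [hform, div_le_iff₀ hμL0]
  linarith [hkey]

/-- Intermediate inequality in the proof of the contraction lemma for the gradient step. -/
theorem gradient_step_sq_bound
    {E : Type*} [NormedAddCommGroup E] [InnerProductSpace ℝ E] [CompleteSpace E]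
    (f : E → ℝ) (μ L : ℝ)
    (hdiff : Differentiable ℝ f)
    (hμ : 0 < μ) (hμL : μ ≤ L)
    (hstrong : ∀ x y : E,
      f y ≥ f x + ⟪gradient f x, y - x⟫ + (μ / 2) * ‖y - x‖ ^ 2)
    (hsmooth : ∀ x y : E, ‖gradient f x - gradient f y‖ ≤ L * ‖x - y‖) :
    ∀ β : ℝ, 0 ≤ β → ∀ x₁ x₂ : E,
      ‖x₁ - x₂ - β • (gradient f x₁ - gradient f x₂)‖ ^ 2 ≤
        (1 - β * (2 * μ * L / (μ + L))) * ‖x₁ - x₂‖ ^ 2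
          - β * (2 / (μ + L) - β) * ‖gradient f x₁ - gradient f x₂‖ ^ 2 := by
  intro β hβ x₁ x₂
  have hL : 0 < L := lt_of_lt_of_le hμ hμL
  have hμL0 : 0 < μ + L := by linarith
  set g := gradient f x₁ - gradient f x₂ with hg
  set w := x₁ - x₂ with hw
  have hco := coercivity f μ L hdiff hμ hμL hstrong hsmooth x₁ x₂
  rw [← hg, ← hw] at hco
  have hexp : ‖w - β • g‖ ^ 2 = ‖w‖ ^ 2 - 2 * β * ⟪w, g⟫ + β ^ 2 * ‖g‖ ^ 2 := by
    rw [norm_sub_sq_real, norm_smul, real_inner_smul_right, Real.norm_eq_abs,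
      abs_of_nonneg hβ, mul_pow]
    ring
  rw [hexp]
  have hmul := mul_le_mul_of_nonneg_left hco hβ
  have e1 : β * (μ * L / (μ + L) * ‖w‖ ^ 2 + 1 / (μ + L) * ‖g‖ ^ 2)
      = β * (μ * L / (μ + L)) * ‖w‖ ^ 2 + β * (1 / (μ + L)) * ‖g‖ ^ 2 := by ring
  rw [e1] at hmul
  have e2 : (1 - β * (2 * μ * L / (μ + L))) * ‖w‖ ^ 2 - β * (2 / (μ + L) - β) * ‖g‖ ^ 2
      = ‖w‖ ^ 2 - 2 * (β * (μ * L / (μ + L)) * ‖w‖ ^ 2) - 2 * (β * (1 / (μ + L)) * ‖g‖ ^ 2)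
        + β ^ 2 * ‖g‖ ^ 2 := by ring
  rw [e2]
  linarith [hmul]
end

section
/- Let E be a real inner product space, n ≥ 1, and for each i ∈ Fin n let fᵢ : E → ℝ be differentiable, μᵢ-strongly convex (μᵢ > 0), and with Lᵢ-Lipschitz gradient. Set L = ∑ᵢ Lᵢ, μ = minᵢ μᵢ, assume 0 < μ ≤ L, and assume F = ∑ᵢ fᵢ is μ-strongly convex and has L-Lipschitz gradient, with ∇F(x*) = 0. Let Δ ≥ 0 and 0 < α ≤ 2n/(μ + L). Suppose sequences x̂ : ℕ → E, xᵢ : ℕ → E, and e : ℕ → E satisfy, for all k: x̂[k+1] = x̂[k] − (α/n)·∑ᵢ ∇fᵢ(xᵢ[k]) + e[k+1], ‖e[k+1]‖ ≤ 2Δ, and ‖xᵢ[k] − x̂[k]‖ ≤ 4Δ for all i. Then limsup_{k→∞} ‖x̂[k] − x*‖ ≤ (n/(αμ))·(4αL/n + 2)·Δ. -/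
open RealInnerProductSpace Filter


lemma qgd_descent {E : Type*} [NormedAddCommGroup E] [InnerProductSpace ℝ E] [CompleteSpace E]
    (F : E → ℝ) (hF : Differentiable ℝ F) (L : ℝ) (hL0 : 0 ≤ L)
    (hlip : ∀ x y, ‖gradient F x - gradient F y‖ ≤ L * ‖x - y‖) (x y : E) :
    F y ≤ F x + ⟪gradient F x, y - x⟫ + L / 2 * ‖y - x‖ ^ 2 := by
  set v := y - x with hv
  have hline : ∀ t : ℝ, HasDerivAt (fun t : ℝ => x + t • v) v t := by
    intro t
    simpa using ((hasDerivAt_id t).smul_const v).const_add x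
  have hphi : ∀ t : ℝ, HasDerivAt (fun t : ℝ => F (x + t • v))
      ⟪gradient F (x + t • v), v⟫ t := by
    intro t
    have h1 : HasFDerivAt F (InnerProductSpace.toDual ℝ E (gradient F (x + t • v))) (x + t • v) :=
      (hF _).hasGradientAt.hasFDerivAt
    exact h1.comp_hasDerivAt t (hline t)
  have hgc : Continuous (gradient F) := by
    have : LipschitzWith L.toNNReal (gradient F) := by
      apply LipschitzWith.of_dist_le_mul
      intro a b
      simpa [dist_eq_norm, Real.coe_toNNReal L hL0] using hlip a b
    exact this.continuous
  have hcont : Continuous fun t : ℝ => ⟪gradient F (x + t • v), v⟫ :=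
    (hgc.comp (by continuity)).inner continuous_const
  have hFTC : F y - F x = ∫ t in (0:ℝ)..1, ⟪gradient F (x + t • v), v⟫ := by
    have := intervalIntegral.integral_eq_sub_of_hasDerivAt (f := fun t : ℝ => F (x + t • v))
      (fun t _ => hphi t) (hcont.intervalIntegrable 0 1)
    simpa [hv] using this.symm
  have hmono : ∫ t in (0:ℝ)..1, ⟪gradient F (x + t • v), v⟫ ≤
      ∫ t in (0:ℝ)..1, (⟪gradient F x, v⟫ + (L * ‖v‖ ^ 2) * t) := by
    apply intervalIntegral.integral_mono_on (by norm_num)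
      (hcont.intervalIntegrable 0 1)
      (intervalIntegrable_const.add ((intervalIntegral.intervalIntegrable_id).const_mul _))
    intro t ht
    rcases ht with ⟨ht0, ht1⟩
    have h1 : ⟪gradient F (x + t • v) - gradient F x, v⟫ ≤ ‖gradient F (x + t • v) - gradient F x‖ * ‖v‖ :=
      real_inner_le_norm _ _
    have h2 : ‖gradient F (x + t • v) - gradient F x‖ ≤ L * (t * ‖v‖) := by
      have := hlip (x + t • v) x
      simpa [norm_smul, abs_of_nonneg ht0, mul_assoc] using this
    have h3 : ⟪gradient F (x + t • v), v⟫ = ⟪gradient F x, v⟫ + ⟪gradient F (x + t • v) - gradient F x, v⟫ := by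
      rw [inner_sub_left]; ring
    have hv0 : (0:ℝ) ≤ ‖v‖ := norm_nonneg v
    nlinarith [mul_le_mul_of_nonneg_right h2 hv0]
  have hint : ∫ t in (0:ℝ)..1, (⟪gradient F x, v⟫ + (L * ‖v‖ ^ 2) * t) =
      ⟪gradient F x, v⟫ + L / 2 * ‖v‖ ^ 2 := by
    rw [intervalIntegral.integral_add intervalIntegrable_const
      ((intervalIntegral.intervalIntegrable_id).const_mul _),
      intervalIntegral.integral_const, intervalIntegral.integral_const_mul,
      integral_id]
    norm_num; ring
  linarith [hFTC, hmono, hint.le]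

lemma qgd_contraction {E : Type*} [NormedAddCommGroup E] [InnerProductSpace ℝ E] [CompleteSpace E]
    (F : E → ℝ) (μ L : ℝ) (hμ0 : 0 < μ) (hμL : μ ≤ L)
    (hstrong : ∀ x y : E, F y ≥ F x + ⟪gradient F x, y - x⟫ + (μ / 2) * ‖y - x‖ ^ 2)
    (hupper : ∀ x y : E, F y ≤ F x + ⟪gradient F x, y - x⟫ + L / 2 * ‖y - x‖ ^ 2)
    (xstar : E) (hxstar : gradient F xstar = 0)
    (η : ℝ) (hη0 : 0 < η) (hη : η * (μ + L) ≤ 2) (z : E) :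
    ‖(z - xstar) - η • gradient F z‖ ≤ (1 - η * μ) * ‖z - xstar‖ := by
  set G : E → ℝ := fun w => F w - μ / 2 * ‖w - xstar‖ ^ 2 with hG
  set h : E → E := fun w => gradient F w - μ • (w - xstar) with hh
  have hid : ∀ a b : E, ‖b - xstar‖ ^ 2 = ‖a - xstar‖ ^ 2 + 2 * ⟪a - xstar, b - a⟫ + ‖b - a‖ ^ 2 := by
    intro a b
    have e : b - xstar = (a - xstar) + (b - a) := by abel
    rw [e, norm_add_sq_real]
  have hinner : ∀ a b : E, ⟪h a, b - a⟫ = ⟪gradient F a, b - a⟫ - μ * ⟪a - xstar, b - a⟫ := by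
    intro a b
    rw [hh]; simp [inner_sub_left, real_inner_smul_left]
  have hconv : ∀ a b : E, G b ≥ G a + ⟪h a, b - a⟫ := by
    intro a b
    have h1 := hstrong a b
    have h2 : μ / 2 * ‖b - xstar‖ ^ 2 =
        μ / 2 * ‖a - xstar‖ ^ 2 + μ * ⟪a - xstar, b - a⟫ + μ / 2 * ‖b - a‖ ^ 2 := by
      rw [hid a b]; ring
    have h3 := hinner a b
    simp only [hG]
    linarith
  have hup : ∀ a b : E, G b ≤ G a + ⟪h a, b - a⟫ + (L - μ) / 2 * ‖b - a‖ ^ 2 := by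
    intro a b
    have h1 := hupper a b
    have h2 : μ / 2 * ‖b - xstar‖ ^ 2 =
        μ / 2 * ‖a - xstar‖ ^ 2 + μ * ⟪a - xstar, b - a⟫ + μ / 2 * ‖b - a‖ ^ 2 := by
      rw [hid a b]; ring
    have h3 := hinner a b
    simp only [hG]
    have h4 : (L - μ) / 2 * ‖b - a‖ ^ 2 = L / 2 * ‖b - a‖ ^ 2 - μ / 2 * ‖b - a‖ ^ 2 := by ring
    linarith
  have hhstar : h xstar = 0 := by simp [hh, hxstar]
  set d : E := z - xstar with hd
  set u : E := h z with hu
  have hpos : 0 ≤ ⟪u, d⟫ := by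
    have h1 := hconv z xstar
    have h2 := hconv xstar z
    rw [hhstar] at h2
    simp only [inner_zero_left] at h2
    have h3 : ⟪u, xstar - z⟫ = -⟪u, d⟫ := by
      rw [hd, show xstar - z = -(z - xstar) by abel, inner_neg_right]
    linarith
  have hcoco : ∀ s : ℝ, 0 ≤ s → (2 * s - (L - μ) * s ^ 2) * ‖u‖ ^ 2 ≤ ⟪u, d⟫ := by
    intro s hs
    have hA := hup z (z - s • u)
    have hB := hconv xstar (z - s • u)
    have hC := hconv z (xstar + s • u)
    have hD := hup xstar (xstar + s • u)
    rw [hhstar] at hB hD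
    simp only [inner_zero_left] at hB hD
    have e1 : z - s • u - z = -(s • u) := by abel
    have e2 : xstar + s • u - xstar = s • u := by abel
    have e3 : xstar + s • u - z = s • u - d := by rw [hd]; abel
    rw [e1] at hA
    rw [e2] at hD
    rw [e3] at hC
    have i1 : ⟪u, -(s • u)⟫ = -(s * ‖u‖ ^ 2) := by
      rw [inner_neg_right, real_inner_smul_right, real_inner_self_eq_norm_sq]
    have i2 : ⟪u, s • u - d⟫ = s * ‖u‖ ^ 2 - ⟪u, d⟫ := by
      rw [inner_sub_right, real_inner_smul_right, real_inner_self_eq_norm_sq]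
    have n1 : ‖-(s • u)‖ ^ 2 = s ^ 2 * ‖u‖ ^ 2 := by
      rw [norm_neg, norm_smul]; rw [Real.norm_eq_abs, mul_pow, sq_abs]
    have n2 : ‖s • u‖ ^ 2 = s ^ 2 * ‖u‖ ^ 2 := by
      rw [norm_smul]; rw [Real.norm_eq_abs, mul_pow, sq_abs]
    rw [i1, n1] at hA
    rw [n2] at hD
    rw [i2] at hC
    obtain ⟨X, hX⟩ : ∃ X, X = (L - μ) / 2 * (s ^ 2 * ‖u‖ ^ 2) := ⟨_, rfl⟩
    obtain ⟨P, hP⟩ : ∃ P, P = s * ‖u‖ ^ 2 := ⟨_, rfl⟩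
    rw [← hX] at hA hD
    rw [← hP] at hA hC
    have egoal : (2 * s - (L - μ) * s ^ 2) * ‖u‖ ^ 2 = 2 * P - 2 * X := by
      rw [hX, hP]; ring
    rw [egoal]
    linarith
  have hunorm : 0 ≤ ‖u‖ ^ 2 := by positivity
  have hkey : ‖u‖ ^ 2 ≤ (L - μ) * ⟪u, d⟫ := by
    rcases eq_or_lt_of_le (sub_nonneg.mpr hμL) with heq | hlt
    · have hz : ‖u‖ ^ 2 = 0 := by
        by_contra hne
        have hupos : 0 < ‖u‖ ^ 2 := lt_of_le_of_ne hunorm (Ne.symm hne)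
        have hs := hcoco ((⟪u, d⟫ + 1) / (2 * ‖u‖ ^ 2)) (by positivity)
        rw [← heq] at hs
        have e : (2 * ((⟪u, d⟫ + 1) / (2 * ‖u‖ ^ 2)) - 0 * ((⟪u, d⟫ + 1) / (2 * ‖u‖ ^ 2)) ^ 2) * ‖u‖ ^ 2
            = ⟪u, d⟫ + 1 := by
          rw [zero_mul, sub_zero, mul_div_assoc', div_mul_eq_mul_div,
            div_eq_iff (mul_pos two_pos hupos).ne']
          ring
        rw [e] at hs
        linarith
      rw [hz, ← heq]
      simp
    · have hs := hcoco (1 / (L - μ)) (by positivity)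
      have e : (2 * (1 / (L - μ)) - (L - μ) * (1 / (L - μ)) ^ 2) * ‖u‖ ^ 2 = ‖u‖ ^ 2 / (L - μ) := by
        field_simp
        ring
      rw [e, div_le_iff₀ hlt] at hs
      linarith
  have hfinal : η * ‖u‖ ^ 2 ≤ 2 * (1 - η * μ) * ⟪u, d⟫ := by
    have h1 : η * ‖u‖ ^ 2 ≤ η * ((L - μ) * ⟪u, d⟫) :=
      mul_le_mul_of_nonneg_left hkey hη0.le
    have h2 : 0 ≤ (2 - η * (μ + L)) * ⟪u, d⟫ :=
      mul_nonneg (by linarith) hpos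
    nlinarith
  have hρ0 : 0 ≤ 1 - η * μ := by
    nlinarith [mul_nonneg hη0.le (sub_nonneg.mpr hμL)]
  have hdecomp : (z - xstar) - η • gradient F z = (1 - η * μ) • d - η • u := by
    simp only [hu, hh, hd]
    module
  rw [hdecomp]
  have hsq : ‖(1 - η * μ) • d - η • u‖ ^ 2 ≤ ((1 - η * μ) * ‖d‖) ^ 2 := by
    rw [norm_sub_sq_real, real_inner_smul_left, real_inner_smul_right]
    have n1 : ‖(1 - η * μ) • d‖ ^ 2 = (1 - η * μ) ^ 2 * ‖d‖ ^ 2 := by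
      rw [norm_smul, Real.norm_eq_abs, mul_pow, sq_abs]
    have n2 : ‖η • u‖ ^ 2 = η ^ 2 * ‖u‖ ^ 2 := by
      rw [norm_smul, Real.norm_eq_abs, mul_pow, sq_abs]
    rw [n1, n2, ← real_inner_comm d u]
    nlinarith [mul_le_mul_of_nonneg_left hfinal hη0.le]
  have h0 : 0 ≤ (1 - η * μ) * ‖d‖ := mul_nonneg hρ0 (norm_nonneg d)
  nlinarith [norm_nonneg ((1 - η * μ) • d - η • u), hsq, h0]

lemma qgd_gradient_sum {E : Type*} [NormedAddCommGroup E] [InnerProductSpace ℝ E] [CompleteSpace E]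
    {n : ℕ} (f : Fin n → E → ℝ) (hdiff : ∀ i, Differentiable ℝ (f i)) (z : E) :
    gradient (fun y => ∑ i, f i y) z = ∑ i, gradient (f i) z := by
  have hsum : HasGradientAt (fun y => ∑ i, f i y) (∑ i, gradient (f i) z) z := by
    rw [hasGradientAt_iff_hasFDerivAt]
    have h1 : HasFDerivAt (fun y => ∑ i : Fin n, f i y)
        (∑ i : Fin n, InnerProductSpace.toDual ℝ E (gradient (f i) z)) z :=
      HasFDerivAt.fun_sum (fun i _ => ((hdiff i z).hasGradientAt).hasFDerivAt)
    rw [map_sum]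
    exact h1
  exact hsum.gradient

lemma qgd_limsup {r : ℕ → ℝ} (hr : ∀ k, 0 ≤ r k) {ρ b : ℝ} (hρ0 : 0 ≤ ρ) (hρ1 : ρ < 1)
    (hb : 0 ≤ b) (hrec : ∀ k, r (k + 1) ≤ ρ * r k + b) :
    Filter.limsup r Filter.atTop ≤ b / (1 - ρ) := by
  have h1ρ : 0 < 1 - ρ := by linarith
  have hq : 0 ≤ b / (1 - ρ) := div_nonneg hb h1ρ.le
  have key : ∀ k, r k ≤ ρ ^ k * r 0 + b / (1 - ρ) := by
    intro k
    induction k with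
    | zero => simp; linarith
    | succ k ih =>
      have h2 : ρ * r k ≤ ρ * (ρ ^ k * r 0 + b / (1 - ρ)) :=
        mul_le_mul_of_nonneg_left ih hρ0
      have h3 : ρ * (b / (1 - ρ)) + b = b / (1 - ρ) := by
        field_simp
        ring
      calc r (k + 1) ≤ ρ * r k + b := hrec k
        _ ≤ ρ * (ρ ^ k * r 0 + b / (1 - ρ)) + b := by linarith
        _ = ρ ^ (k + 1) * r 0 + (ρ * (b / (1 - ρ)) + b) := by ring
        _ = ρ ^ (k + 1) * r 0 + b / (1 - ρ) := by rw [h3]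
  have htend : Tendsto (fun k : ℕ => ρ ^ k * r 0 + b / (1 - ρ)) atTop
      (nhds (0 * r 0 + b / (1 - ρ))) :=
    ((tendsto_pow_atTop_nhds_zero_of_lt_one hρ0 hρ1).mul_const _).add_const _
  have hle : limsup r atTop ≤ limsup (fun k : ℕ => ρ ^ k * r 0 + b / (1 - ρ)) atTop := by
    refine limsup_le_limsup (Filter.Eventually.of_forall key) ?_ ?_
    · have hbd : IsBoundedUnder (· ≥ ·) atTop r := Filter.isBoundedUnder_of ⟨0, fun k => hr k⟩
      exact hbd.isCoboundedUnder_le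
    · exact htend.isBoundedUnder_le
  have heq : limsup (fun k : ℕ => ρ ^ k * r 0 + b / (1 - ρ)) atTop = 0 * r 0 + b / (1 - ρ) :=
    htend.limsup_eq
  rw [heq] at hle
  simpa using hle


/-- The iterates of quantized averaged gradient descent converge to a neighborhood of
the optimal solution of radius `(n/(αμ))·(4αL/n + 2)·Δ`. -/
theorem quantized_gradient_descent_limsup_bound
    {E : Type*} [NormedAddCommGroup E] [InnerProductSpace ℝ E] [CompleteSpace E]
    (n : ℕ) (hn : 1 ≤ n)
    (f : Fin n → E → ℝ) (μloc Lloc : Fin n → ℝ)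
    (hdiff : ∀ i, Differentiable ℝ (f i))
    (hμloc : ∀ i, 0 < μloc i)
    (hstrongloc : ∀ i, ∀ x y : E,
      f i y ≥ f i x + ⟪gradient (f i) x, y - x⟫ + (μloc i / 2) * ‖y - x‖ ^ 2)
    (hsmoothloc : ∀ i, ∀ x y : E,
      ‖gradient (f i) x - gradient (f i) y‖ ≤ Lloc i * ‖x - y‖)
    (L μ : ℝ) (hL : L = ∑ i, Lloc i) (hμ : μ = ⨅ i, μloc i)
    (hμ0 : 0 < μ) (hμL : μ ≤ L)
    (F : E → ℝ) (hF : F = fun y => ∑ i, f i y)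
    (hstrong : ∀ x y : E,
      F y ≥ F x + ⟪gradient F x, y - x⟫ + (μ / 2) * ‖y - x‖ ^ 2)
    (hsmooth : ∀ x y : E, ‖gradient F x - gradient F y‖ ≤ L * ‖x - y‖)
    (xstar : E) (hxstar : gradient F xstar = 0)
    (Δ : ℝ) (hΔ : 0 ≤ Δ)
    (α : ℝ) (hα0 : 0 < α) (hα : α ≤ 2 * n / (μ + L))
    (xhat : ℕ → E) (x : Fin n → ℕ → E) (e : ℕ → E)
    (hrec : ∀ k, xhat (k + 1) = xhat k - (α / n) • (∑ i, gradient (f i) (x i k)) + e (k + 1))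
    (he : ∀ k, ‖e (k + 1)‖ ≤ 2 * Δ)
    (hx : ∀ k, ∀ i, ‖x i k - xhat k‖ ≤ 4 * Δ) :
    Filter.limsup (fun k => ‖xhat k - xstar‖) Filter.atTop ≤
      (n / (α * μ)) * ((4 * α * L / n + 2) * Δ) := by
  have hn0 : (0:ℝ) < n := by exact_mod_cast hn
  set η : ℝ := α / n with hηdef
  have hη0 : 0 < η := div_pos hα0 hn0
  have hμL0 : 0 < μ + L := by linarith
  have hαbound : α * (μ + L) ≤ 2 * n := by
    have := (le_div_iff₀ hμL0).mp hα
    linarith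
  have hη2 : η * (μ + L) ≤ 2 := by
    rw [hηdef, div_mul_eq_mul_div, div_le_iff₀ hn0]
    linarith
  have hL0 : 0 ≤ L := le_trans hμ0.le hμL
  have hdiffF : Differentiable ℝ F := by
    rw [hF]
    exact fun z => DifferentiableAt.fun_sum fun i _ => (hdiff i z)
  have hupper := qgd_descent F hdiffF L hL0 hsmooth
  have hcontr := fun z => qgd_contraction F μ L hμ0 hμL hstrong hupper xstar hxstar η hη0 hη2 z
  have hgradF : ∀ z, gradient F z = ∑ i, gradient (f i) z := by
    intro z
    rw [hF]
    exact qgd_gradient_sum f hdiff z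
  have hRHS0 : 0 ≤ (n / (α * μ)) * ((4 * α * L / n + 2) * Δ) := by
    apply mul_nonneg
    · exact div_nonneg (Nat.cast_nonneg n) (mul_nonneg hα0.le hμ0.le)
    · apply mul_nonneg _ hΔ
      have : 0 ≤ 4 * α * L / n :=
        div_nonneg (mul_nonneg (mul_nonneg (by norm_num) hα0.le) hL0) hn0.le
      linarith
  rcases subsingleton_or_nontrivial E with hsub | hnt
  · have hz : (fun k => ‖xhat k - xstar‖) = fun _ : ℕ => (0:ℝ) := by
      funext k
      rw [Subsingleton.elim (xhat k - xstar) (0:E), norm_zero]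
    rw [hz, Filter.limsup_const]
    exact hRHS0
  · obtain ⟨v, hv⟩ := exists_ne (0:E)
    have hvn : 0 < ‖v‖ := norm_pos_iff.mpr hv
    have hLloc0 : ∀ i, 0 ≤ Lloc i := by
      intro i
      have h1 := hsmoothloc i v 0
      rw [sub_zero] at h1
      nlinarith [norm_nonneg (gradient (f i) v - gradient (f i) 0)]
    have hstep : ∀ k, ‖xhat (k+1) - xstar‖ ≤
        (1 - η * μ) * ‖xhat k - xstar‖ + (4 * η * L * Δ + 2 * Δ) := by
      intro k
      have hA := hcontr (xhat k)
      have hBnorm : ‖gradient F (xhat k) - ∑ i, gradient (f i) (x i k)‖ ≤ 4 * L * Δ := by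
        rw [hgradF, ← Finset.sum_sub_distrib]
        calc ‖∑ i, (gradient (f i) (xhat k) - gradient (f i) (x i k))‖
            ≤ ∑ i, ‖gradient (f i) (xhat k) - gradient (f i) (x i k)‖ := norm_sum_le _ _
          _ ≤ ∑ i, Lloc i * (4 * Δ) := by
              apply Finset.sum_le_sum
              intro i _
              calc ‖gradient (f i) (xhat k) - gradient (f i) (x i k)‖
                  ≤ Lloc i * ‖xhat k - x i k‖ := hsmoothloc i _ _
                _ ≤ Lloc i * (4 * Δ) := by
                    apply mul_le_mul_of_nonneg_left _ (hLloc0 i)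
                    rw [norm_sub_rev]
                    exact hx k i
          _ = L * (4 * Δ) := by rw [← Finset.sum_mul, ← hL]
          _ = 4 * L * Δ := by ring
      have hdec : xhat (k+1) - xstar =
          ((xhat k - xstar) - η • gradient F (xhat k)) +
          (η • (gradient F (xhat k) - ∑ i, gradient (f i) (x i k))) + e (k+1) := by
        rw [hrec k, smul_sub]
        abel
      calc ‖xhat (k+1) - xstar‖
          ≤ ‖(xhat k - xstar) - η • gradient F (xhat k)‖ +
            ‖η • (gradient F (xhat k) - ∑ i, gradient (f i) (x i k))‖ + ‖e (k+1)‖ := by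
            rw [hdec]; exact norm_add₃_le
        _ ≤ (1 - η * μ) * ‖xhat k - xstar‖ + η * (4 * L * Δ) + 2 * Δ := by
            have hB : ‖η • (gradient F (xhat k) - ∑ i, gradient (f i) (x i k))‖
                ≤ η * (4 * L * Δ) := by
              rw [norm_smul, Real.norm_eq_abs, abs_of_pos hη0]
              exact mul_le_mul_of_nonneg_left hBnorm hη0.le
            linarith [he k]
        _ = (1 - η * μ) * ‖xhat k - xstar‖ + (4 * η * L * Δ + 2 * Δ) := by ring
    have hρ0 : 0 ≤ 1 - η * μ := by
      nlinarith [mul_nonneg hη0.le (sub_nonneg.mpr hμL)]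
    have hρ1 : 1 - η * μ < 1 := by nlinarith [mul_pos hη0 hμ0]
    have hb0 : 0 ≤ 4 * η * L * Δ + 2 * Δ := by
      have h1 : 0 ≤ 4 * η * L * Δ :=
        mul_nonneg (mul_nonneg (mul_nonneg (by norm_num) hη0.le) hL0) hΔ
      linarith
    have hlimsup := qgd_limsup (r := fun k => ‖xhat k - xstar‖)
      (fun k => norm_nonneg _) hρ0 hρ1 hb0 hstep
    have hconv : (4 * η * L * Δ + 2 * Δ) / (1 - (1 - η * μ)) =
        (n / (α * μ)) * ((4 * α * L / n + 2) * Δ) := by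
      rw [hηdef]
      field_simp
      ring
    rw [hconv] at hlimsup
    exact hlimsup
end
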